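/- Let n ≥ 1, k ≥ 0, t ≥ 1 be integers and let G_1,…,G_t be simple graphs on vertex set {1,…,n}. Consider the system of linear constraints in integer variables x_1,…,x_n ∈ {0,1}; y_{i,j} ∈ {0,1} for 1 ≤ i < j ≤ n; s with 1 ≤ s ≤ t; and d^{i,j}_p, c^{i,j}_p ∈ {0,1} for 1 ≤ i < j ≤ n and p ∈ {1,…,t}; with constraints: (a) ∑_{i=1}^n x_i ≥ k; (b) x_i + x_j + y_{i,j} ≤ 2 for all 1 ≤ i < j ≤ n; (c) s ≥ p − t·d^{i,j}_p and s ≤ p + t·d^{i,j}_p for all i < j and all p; (d) c^{i,j}_1 = d^{i,j}_1, c^{i,j}_ℓ = c^{i,j}_{ℓ−1} + d^{i,j}_ℓ − 1 for all ℓ ∈ {2,…,t}, and c^{i,j}_t = 0, for all i < j; (e) for all i < j and all p: y_{i,j} ≥ 1 − d^{i,j}_p if {i,j} is an edge of G_p, and y_{i,j} ≤ d^{i,j}_p if {i,j} is not an edge of G_p. This system has an integer solution if and only if there exists s* ∈ {1,…,t} such that G_{s*} has an independent set of size at least k. -/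

import Mathlib

lemma exists_dzero (t : ℤ) (ht : 1 ≤ t) (d c : ℤ → ℤ)
    (hd : ∀ p, 1 ≤ p → p ≤ t → d p = 0 ∨ d p = 1)
    (h1 : c 1 = d 1)
    (hstep : ∀ ℓ, 2 ≤ ℓ → ℓ ≤ t → c ℓ = c (ℓ - 1) + d ℓ - 1)
    (hct : c t = 0) : ∃ p, 1 ≤ p ∧ p ≤ t ∧ d p = 0 := by
  by_contra h
  push_neg at h
  have hd1 : ∀ p, 1 ≤ p → p ≤ t → d p = 1 := by
    intro p h1p hpt
    rcases hd p h1p hpt with h0 | h1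
    · exact absurd h0 (h p h1p hpt)
    · exact h1
  have claim : ∀ m : ℕ, (m : ℤ) + 1 ≤ t → c ((m : ℤ) + 1) = 1 := by
    intro m
    induction m with
    | zero => intro hm; simpa using h1.trans (hd1 1 le_rfl ht)
    | succ m ih =>
      intro hm
      push_cast at hm ⊢
      have hst := hstep ((m : ℤ) + 2) (by omega) (by omega)
      have hdm := hd1 ((m : ℤ) + 2) (by omega) (by omega)
      have ihm := ih (by omega)
      have he : (m : ℤ) + 1 + 1 = (m : ℤ) + 2 := by ring
      have he2 : (m : ℤ) + 2 - 1 = (m : ℤ) + 1 := by ring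
      rw [he, hst, he2, ihm, hdm]
      ring
  have ht' : ((t - 1).toNat : ℤ) + 1 = t := by omega
  have := claim (t - 1).toNat (by omega)
  rw [ht'] at this
  omega

/-- Correctness of the cross-composition of `t` Independent Set instances
`G 1, …, G t`, each on vertex set `Fin n` with target `k`, into a single
ILP Feasibility instance: the constructed system has an integer solution iff
some input graph `G s*` has an independent set of size at least `k`. -/
theorem crossComposition_correct (n k : ℕ) (t : ℤ) (hn : 1 ≤ n) (ht : 1 ≤ t)
    (G : ℤ → SimpleGraph (Fin n)) :
    (∃ (x : Fin n → ℤ) (y : Fin n → Fin n → ℤ) (s : ℤ)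
        (d c : Fin n → Fin n → ℤ → ℤ),
      -- domains
      (∀ i, x i = 0 ∨ x i = 1) ∧
      (∀ i j : Fin n, i < j → (y i j = 0 ∨ y i j = 1)) ∧
      (1 ≤ s ∧ s ≤ t) ∧
      (∀ i j : Fin n, i < j → ∀ p, 1 ≤ p → p ≤ t →
        ((d i j p = 0 ∨ d i j p = 1) ∧ (c i j p = 0 ∨ c i j p = 1))) ∧
      -- (a) the selected vertices form a set of size at least k
      ((k : ℤ) ≤ ∑ i, x i) ∧
      -- (b) consistency of the selection with the edge indicators
      (∀ i j : Fin n, i < j → x i + x j + y i j ≤ 2) ∧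
      -- (c) the indicator variables d are forced by the selector s
      (∀ i j : Fin n, i < j → ∀ p, 1 ≤ p → p ≤ t →
        (p - t * d i j p ≤ s ∧ s ≤ p + t * d i j p)) ∧
      -- (d) chain constraints enforcing ∑_p d i j p = t - 1
      (∀ i j : Fin n, i < j →
        (c i j 1 = d i j 1 ∧
         (∀ ℓ, 2 ≤ ℓ → ℓ ≤ t → c i j ℓ = c i j (ℓ - 1) + d i j ℓ - 1) ∧
         c i j t = 0)) ∧
      -- (e) edge indicators of the selected graph
      (∀ i j : Fin n, i < j → ∀ p, 1 ≤ p → p ≤ t →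
        (((G p).Adj i j → 1 - d i j p ≤ y i j) ∧
         (¬ (G p).Adj i j → y i j ≤ d i j p)))) ↔
    (∃ s' : ℤ, 1 ≤ s' ∧ s' ≤ t ∧
      ∃ S : Finset (Fin n), k ≤ S.card ∧
        ∀ u ∈ S, ∀ v ∈ S, ¬ (G s').Adj u v) := by
  constructor
  · rintro ⟨x, y, s, d, c, hx, hy, ⟨hs1, hst⟩, hdc, ha, hb, hc, hchain, he⟩
    refine ⟨s, hs1, hst, Finset.univ.filter (fun i => x i = 1), ?_, ?_⟩
    · have hsum : ∑ i, x i = ((Finset.univ.filter (fun i => x i = 1)).card : ℤ) := by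
        rw [Finset.card_filter]
        push_cast
        refine Finset.sum_congr rfl fun i _ => ?_
        rcases hx i with h | h <;> simp [h]
      have : (k : ℤ) ≤ ((Finset.univ.filter (fun i => x i = 1)).card : ℤ) := hsum ▸ ha
      exact_mod_cast this
    · have key : ∀ i j : Fin n, i < j → x i = 1 → x j = 1 → ¬ (G s).Adj i j := by
        intro i j hij hxi hxj hadj
        obtain ⟨p, hp1, hpt, hdp⟩ := exists_dzero t ht (d i j) (c i j)
          (fun p h1 h2 => (hdc i j hij p h1 h2).1)
          (hchain i j hij).1 (hchain i j hij).2.1 (hchain i j hij).2.2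
        have hcs := hc i j hij p hp1 hpt
        have hsp : s = p := by rw [hdp] at hcs; omega
        have hy1 := (he i j hij p hp1 hpt).1 (hsp ▸ hadj)
        have hb' := hb i j hij
        rw [hdp] at hy1
        omega
      intro u hu v hv hadj
      simp only [Finset.mem_filter] at hu hv
      rcases lt_trichotomy u v with h | h | h
      · exact key u v h hu.2 hv.2 hadj
      · exact (G s).loopless.irrefl u (h ▸ hadj)
      · exact key v u h hv.2 hu.2 hadj.symm
  · rintro ⟨s', hs1, hst, S, hS, hind⟩
    classical
    refine ⟨fun i => if i ∈ S then 1 else 0,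
      fun i j => if (G s').Adj i j then 1 else 0, s',
      fun _ _ p => if p = s' then 0 else 1,
      fun _ _ ℓ => if ℓ < s' then 1 else 0, ?_, ?_, ⟨hs1, hst⟩, ?_, ?_, ?_, ?_, ?_, ?_⟩
    · intro i; dsimp only; split_ifs <;> simp
    · intro i j _; dsimp only; split_ifs <;> simp
    · intro i j _ p _ _
      constructor <;> dsimp only <;> split_ifs <;> simp
    · have hsum : ∑ i, (if i ∈ S then (1 : ℤ) else 0) = (S.card : ℤ) := by
        simp
      rw [hsum]; exact_mod_cast hS
    · intro i j hij
      dsimp only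
      by_cases hiS : i ∈ S <;> by_cases hjS : j ∈ S
      · have := hind i hiS j hjS
        simp [hiS, hjS, this]
      all_goals split_ifs <;> simp_all
    · intro i j _ p hp1 hpt
      dsimp only
      by_cases h : p = s'
      · subst h; simp
      · simp only [if_neg h]; omega
    · intro i j _
      dsimp only
      refine ⟨?_, ?_, ?_⟩
      · by_cases h : s' = 1
        · simp [h]
        · rw [if_pos (by omega), if_neg (by omega)]
      · intro ℓ h2 hlt
        rcases lt_trichotomy ℓ s' with h | h | h
        · rw [if_pos h, if_pos (by omega), if_neg (by omega)]; ring
        · rw [if_neg (by omega), if_pos (by omega), if_pos (by omega)]; ring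
        · rw [if_neg (by omega), if_neg (by omega), if_neg (by omega)]; ring
      · rw [if_neg (by omega)]
    · intro i j _ p _ _
      dsimp only
      by_cases h : p = s'
      · subst h
        constructor
        · intro hadj; simp [hadj]
        · intro hnadj; simp [hnadj]
      · constructor <;> intro _ <;> rw [if_neg h] <;> split_ifs <;> omega
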